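/- Let m be a positive integer, d ≥ 1 a real number, and Q_m(x) = Σ_{i=0}^m x^i. If (m+1)/(d+1) is a positive integer, then Q_m(x+d) has the unique mode m̄ = ⌈(m−d)/(d+1)⌉. -/

import Mathlib

open Finset

/-- The coefficients of `P(x+d)` where `P(x) = ∑_{i=0}^m a i * x^i`:
`b j = ∑_{i=j}^m a i * d^(i-j) * C(i,j)`. -/
noncomputable def shiftCoeff (a : ℕ → ℝ) (m : ℕ) (d : ℝ) (j : ℕ) : ℝ :=
  ∑ i ∈ Finset.Icc j m, a i * d ^ (i - j) * (i.choose j : ℝ)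

/-- `t` is a mode of the finite sequence `b 0, b 1, …, b m`, i.e.
`b 0 ≤ ⋯ ≤ b t ≥ ⋯ ≥ b m`. -/
def IsMode (b : ℕ → ℝ) (m t : ℕ) : Prop :=
  t ≤ m ∧ (∀ i, i < t → b i ≤ b (i + 1)) ∧ (∀ i, t ≤ i → i < m → b (i + 1) ≤ b i)

/-- `m̄(d) = ⌈(m - d)/(d + 1)⌉` (a nonnegative integer since `(m-d)/(d+1) > -1`). -/
noncomputable def mbar (m : ℕ) (d : ℝ) : ℕ := (⌈((m : ℝ) - d) / (d + 1)⌉).toNat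

/-- The coefficients of `Q_m(x+d)` where `Q_m(x) = ∑_{i=0}^m x^i`:
`d_j = ∑_{i=j}^m d^(i-j) * C(i,j)`. -/
noncomputable def qCoeff (m : ℕ) (d : ℝ) (j : ℕ) : ℝ :=
  ∑ i ∈ Finset.Icc j m, d ^ (i - j) * (i.choose j : ℝ)


noncomputable def Jsum (c : ℝ) (n p : ℕ) : ℝ :=
  ∑ r ∈ Finset.range (n + 1), (n.choose r : ℝ) * c ^ r / ((p : ℝ) + r + 1)

lemma qCoeff_expand (c : ℝ) (s m : ℕ) (hm : s ≤ m) :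
    qCoeff m (1 + c) s
      = ∑ r ∈ Finset.range (m - s + 1),
          ((s + r).choose s : ℝ) * ((m + 1).choose (s + r + 1) : ℝ) * c ^ r := by
  induction m, hm using Nat.le_induction with
  | base => simp [qCoeff]
  | succ m hm ih =>
    have hst : s ≤ m + 1 := by omega
    have hIcc : qCoeff (m+1) (1+c) s
        = qCoeff m (1+c) s + (1+c) ^ (m+1-s) * ((m+1).choose s : ℝ) := by
      unfold qCoeff
      rw [Finset.sum_Icc_succ_top hst]
    rw [hIcc, ih]
    have hms : m + 1 - s + 1 = (m - s + 1) + 1 := by omega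
    rw [hms]
    -- pascal split on RHS
    have pascal : ∀ r ∈ Finset.range (m - s + 1 + 1),
        ((s + r).choose s : ℝ) * ((m + 1 + 1).choose (s + r + 1) : ℝ) * c ^ r
          = ((s + r).choose s : ℝ) * ((m + 1).choose (s + r + 1) : ℝ) * c ^ r
            + ((s + r).choose s : ℝ) * ((m + 1).choose (s + r) : ℝ) * c ^ r := by
      intro r _
      have : (m + 1 + 1).choose (s + r + 1) = (m+1).choose (s+r) + (m+1).choose (s+r+1) :=
        Nat.choose_succ_succ' (m+1) (s+r)
      rw [this]
      push_cast
      ring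
    rw [Finset.sum_congr rfl pascal, Finset.sum_add_distrib]
    congr 1
    · -- first sum : top term vanishes
      conv_rhs => rw [Finset.sum_range_succ]
      have : (m+1).choose (s + (m - s + 1) + 1) = 0 := by
        apply Nat.choose_eq_zero_of_lt; omega
      rw [this]
      simp
    · -- second sum equals (1+c)^(m+1-s) * C(m+1,s)
      have hterm : ∀ r ∈ Finset.range (m - s + 1 + 1),
          ((s + r).choose s : ℝ) * ((m + 1).choose (s + r) : ℝ) * c ^ r
            = ((m+1).choose s : ℝ) * (((m+1-s).choose r : ℝ) * c ^ r) := by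
        intro r hr
        rw [Finset.mem_range] at hr
        have h1 : (m+1).choose (s+r) * (s+r).choose s
            = (m+1).choose s * (m+1-s).choose r := by
          have := Nat.choose_mul (n := m + 1) (show s ≤ s + r by omega)
          simpa using this
        have h1R : (((m+1).choose (s+r) : ℝ)) * ((s+r).choose s : ℝ)
            = ((m+1).choose s : ℝ) * ((m+1-s).choose r : ℝ) := by exact_mod_cast congrArg Nat.cast h1
        linear_combination c ^ r * h1R
      rw [Finset.sum_congr rfl hterm, ← Finset.mul_sum]
      have hbin : (1+c) ^ (m+1-s) = ∑ r ∈ Finset.range (m - s + 1 + 1),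
          ((m+1-s).choose r : ℝ) * c ^ r := by
        have := add_pow c 1 (m+1-s)
        simp only [one_pow, mul_one] at this
        rw [add_comm c 1] at this
        rw [this]
        have : m + 1 - s + 1 = m - s + 1 + 1 := by omega
        rw [this]
        apply Finset.sum_congr rfl
        intro r _
        ring
      rw [hbin]
      ring

lemma qCoeff_J (c : ℝ) (m s : ℕ) (hs : s ≤ m) :
    qCoeff m (1 + c) s = ((m : ℝ) + 1) * (m.choose s : ℝ) * Jsum c (m - s) s := by
  rw [qCoeff_expand c s m hs, Jsum, Finset.mul_sum]
  apply Finset.sum_congr rfl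
  intro r hr
  rw [Finset.mem_range] at hr
  have hsr : s + r ≤ m := by omega
  have h1 : (m+1) * m.choose (s+r) = (m+1).choose (s+r+1) * (s+r+1) :=
    Nat.add_one_mul_choose_eq m (s+r)
  have h2 : m.choose (s+r) * (s+r).choose s = m.choose s * (m-s).choose r := by
    have := Nat.choose_mul (n := m) (show s ≤ s + r by omega)
    simpa using this
  have key : (s+r).choose s * ((m+1).choose (s+r+1) * (s+r+1))
      = (m+1) * (m.choose s * (m-s).choose r) := by
    rw [← h1, ← h2]; ring
  have keyR : ((s+r).choose s : ℝ) * (((m+1).choose (s+r+1) : ℝ) * ((s:ℝ)+r+1))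
      = ((m:ℝ)+1) * ((m.choose s : ℝ) * ((m-s).choose r : ℝ)) := by
    exact_mod_cast congrArg (Nat.cast : ℕ → ℝ) key
  have hpos : ((s:ℝ) + r + 1) ≠ 0 := by positivity
  field_simp
  linear_combination c ^ r * keyR

lemma Jsum_succ (c : ℝ) (n p : ℕ) :
    Jsum c (n+1) p = Jsum c n p + c * Jsum c n (p+1) := by
  have hL : Jsum c (n+1) p
      = 1 / ((p:ℝ) + 1)
        + ∑ r ∈ Finset.range (n+1),
            (((n.choose r : ℝ) + (n.choose (r+1) : ℝ)) * c ^ (r+1) / ((p:ℝ) + r + 2)) := by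
    rw [Jsum, Finset.sum_range_succ']
    simp only [Nat.choose_succ_succ' n]
    push_cast
    rw [add_comm]
    congr 1
    · norm_num
    · apply Finset.sum_congr rfl; intro r _; ring_nf
  rw [hL]
  have hsplit : ∑ r ∈ Finset.range (n+1),
      (((n.choose r : ℝ) + (n.choose (r+1) : ℝ)) * c ^ (r+1) / ((p:ℝ) + r + 2))
      = (∑ r ∈ Finset.range (n+1), (n.choose (r+1) : ℝ) * c ^ (r+1) / ((p:ℝ) + r + 2))
        + ∑ r ∈ Finset.range (n+1), (n.choose r : ℝ) * c ^ (r+1) / ((p:ℝ) + r + 2) := by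
    rw [← Finset.sum_add_distrib]
    apply Finset.sum_congr rfl; intro r _; ring
  rw [hsplit]
  have h2 : c * Jsum c n (p+1)
      = ∑ r ∈ Finset.range (n+1), (n.choose r : ℝ) * c ^ (r+1) / ((p:ℝ) + r + 2) := by
    rw [Jsum, Finset.mul_sum]
    apply Finset.sum_congr rfl; intro r _
    push_cast
    ring
  have h1 : Jsum c n p
      = 1 / ((p:ℝ) + 1)
        + ∑ r ∈ Finset.range (n+1), (n.choose (r+1) : ℝ) * c ^ (r+1) / ((p:ℝ) + r + 2) := by
    rw [Jsum, Finset.sum_range_succ']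
    rw [Finset.sum_range_succ]
    simp [Nat.choose_succ_self]
    rw [add_comm]
    congr 1
    apply Finset.sum_congr rfl; intro r _
    push_cast
    ring_nf
  rw [h1, h2]
  ring

lemma Jsum_nonneg (c : ℝ) (hc : 0 ≤ c) (n p : ℕ) : 0 ≤ Jsum c n p := by
  apply Finset.sum_nonneg
  intro r _
  apply div_nonneg
  · exact mul_nonneg (by positivity) (pow_nonneg hc r)
  · positivity

lemma Jsum_anti (c : ℝ) (hc : 0 ≤ c) (n p : ℕ) : Jsum c n (p+1) < Jsum c n p := by
  apply Finset.sum_lt_sum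
  · intro r _
    have hcr : (0:ℝ) ≤ (n.choose r : ℝ) * c ^ r := mul_nonneg (by positivity) (pow_nonneg hc r)
    push_cast
    rw [div_le_div_iff₀ (by positivity) (by positivity)]
    nlinarith [hcr]
  · refine ⟨0, by simp, ?_⟩
    simp only [Nat.choose_zero_right, Nat.cast_one, pow_zero, Nat.cast_zero]
    push_cast
    rw [div_lt_div_iff₀ (by positivity) (by positivity)]
    nlinarith

lemma key_pos (c A B : ℝ) (n p : ℕ) (hc : 0 ≤ c) (hB : 0 < B) (hAB : A ≤ B) :
    A * Jsum c n (p+1) < B * Jsum c n p := by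
  calc A * Jsum c n (p+1) ≤ B * Jsum c n (p+1) :=
        mul_le_mul_of_nonneg_right hAB (Jsum_nonneg c hc n (p+1))
    _ < B * Jsum c n p := by
        exact (mul_lt_mul_iff_right₀ hB).mpr (Jsum_anti c hc n p)

lemma key_neg (c A B : ℝ) (n p : ℕ) (hc : 0 ≤ c) (hB : 0 < B)
    (hA : ((p:ℝ) + 3) * B ≤ ((p:ℝ) + 1) * A) :
    B * Jsum c n p < A * Jsum c n (p+1) := by
  rw [Jsum, Jsum, Finset.mul_sum, Finset.mul_sum]
  apply Finset.sum_lt_sum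
  · intro r _
    have hcr : (0:ℝ) ≤ (n.choose r : ℝ) * c ^ r := mul_nonneg (by positivity) (pow_nonneg hc r)
    have hd1 : (0:ℝ) < (p:ℝ) + r + 1 := by positivity
    have hd2 : (0:ℝ) < ((p:ℝ)+1) + r + 1 := by positivity
    have hBA : B * (((p:ℝ)+1) + r + 1) ≤ A * ((p:ℝ) + r + 1) := by
      nlinarith [hB.le, (by positivity : (0:ℝ) ≤ (r:ℝ))]
    rw [mul_div_assoc', mul_div_assoc']
    push_cast
    rw [div_le_div_iff₀ hd1 hd2]
    nlinarith [hcr, hBA]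
  · refine ⟨0, by simp, ?_⟩
    simp only [Nat.choose_zero_right, Nat.cast_one, pow_zero, Nat.cast_zero]
    rw [mul_div_assoc', mul_div_assoc']
    push_cast
    rw [div_lt_div_iff₀ (by positivity) (by positivity)]
    nlinarith [hB]

lemma qdiff (c : ℝ) (m j : ℕ) (hj : j < m) :
    qCoeff m (1+c) j - qCoeff m (1+c) (j+1)
      = ((m:ℝ)+1) * ((m.choose j : ℝ) * Jsum c (m-1-j) j
          - ((m.choose (j+1) : ℝ) - c * (m.choose j : ℝ)) * Jsum c (m-1-j) (j+1)) := by
  rw [qCoeff_J c m j hj.le, qCoeff_J c m (j+1) hj]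
  rw [show m - j = (m-1-j) + 1 from by omega, show m - (j+1) = m-1-j from by omega]
  rw [Jsum_succ]
  ring


/-- Corollary 3.1.  Let `d ≥ 1`.  If `(m+1)/(d+1)` is a positive
integer, then `Q_m(x+d)` has the unique mode `m̄ = ⌈(m−d)/(d+1)⌉`. -/
theorem stmt_10 (m : ℕ) (hm : 0 < m) (d : ℝ) (hd : 1 ≤ d)
    (hint : ∃ k : ℕ, 0 < k ∧ (k : ℝ) * (d + 1) = (m : ℝ) + 1) :
    ∀ t, IsMode (qCoeff m d) m t ↔ t = mbar m d := by
  obtain ⟨k, hk0, hkd⟩ := hint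
  have hc : (0:ℝ) ≤ d - 1 := by linarith
  set c : ℝ := d - 1 with hcdef
  have hdc : d = 1 + c := by rw [hcdef]; ring
  have hkR : (0:ℝ) < (k:ℝ) := by exact_mod_cast hk0
  have h2k : 2 * k ≤ m + 1 := by
    have h : (2*k : ℝ) ≤ (m:ℝ)+1 := by nlinarith
    exact_mod_cast h
  have hkm : k - 1 < m := by omega
  -- mbar = k - 1
  have hmbar : mbar m d = k - 1 := by
    have hd1p : (0:ℝ) < d + 1 := by linarith
    have hval : ((m:ℝ) - d) / (d+1) = (k:ℝ) - 1 := by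
      field_simp
      linarith
    rw [mbar, hval]
    rw [show (k:ℝ) - 1 = (((k:ℤ) - 1 : ℤ) : ℝ) from by push_cast; ring, Int.ceil_intCast]
    omega
  rw [hdc] at hkd
  -- decreasing part
  have hdec : ∀ j, k - 1 ≤ j → j < m → qCoeff m d (j+1) < qCoeff m d j := by
    intro j hj hjm
    have hBpos : (0:ℝ) < (m.choose j : ℝ) := by exact_mod_cast Nat.choose_pos hjm.le
    have hchoose : ((m.choose (j+1) : ℝ)) * ((j:ℝ)+1) = (m.choose j : ℝ) * ((m:ℝ) - j) := by
      have h := congrArg (Nat.cast : ℕ → ℝ) (Nat.choose_succ_right_eq m j)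
      push_cast [Nat.cast_sub hjm.le] at h
      linarith [h]
    have hkj : (k:ℝ) ≤ (j:ℝ) + 1 := by exact_mod_cast (show k ≤ j + 1 by omega)
    have hj1 : (0:ℝ) < (j:ℝ) + 1 := by positivity
    have hmj : (m:ℝ) - j ≤ ((j:ℝ)+1) * (1+c) := by
      nlinarith [mul_le_mul_of_nonneg_right hkj (show (0:ℝ) ≤ 1 + c by linarith)]
    have hAB : (m.choose (j+1) : ℝ) - c * (m.choose j : ℝ) ≤ (m.choose j : ℝ) := by
      have h3 : (m.choose (j+1):ℝ) * ((j:ℝ)+1) ≤ ((1+c) * (m.choose j : ℝ)) * ((j:ℝ)+1) := by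
        rw [hchoose]
        nlinarith [mul_le_mul_of_nonneg_left hmj hBpos.le]
      have h4 := le_of_mul_le_mul_right h3 hj1
      nlinarith [h4]
    have key := key_pos c ((m.choose (j+1) : ℝ) - c * (m.choose j : ℝ))
      (m.choose j : ℝ) (m-1-j) j hc hBpos hAB
    have hdiff := qdiff c m j hjm
    have hpos2 : (0:ℝ) < ((m:ℝ)+1) * ((m.choose j : ℝ) * Jsum c (m-1-j) j
        - ((m.choose (j+1) : ℝ) - c * (m.choose j : ℝ)) * Jsum c (m-1-j) (j+1)) :=
      mul_pos (by positivity) (sub_pos.mpr key)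
    rw [hdc]
    linarith [hdiff, hpos2]
  -- increasing part
  have hinc : ∀ j, j + 2 ≤ k → qCoeff m d j < qCoeff m d (j+1) := by
    intro j hj
    have hjm : j < m := by omega
    have hBpos : (0:ℝ) < (m.choose j : ℝ) := by exact_mod_cast Nat.choose_pos hjm.le
    have hchoose : ((m.choose (j+1) : ℝ)) * ((j:ℝ)+1) = (m.choose j : ℝ) * ((m:ℝ) - j) := by
      have h := congrArg (Nat.cast : ℕ → ℝ) (Nat.choose_succ_right_eq m j)
      push_cast [Nat.cast_sub hjm.le] at h
      linarith [h]
    have hkj : (j:ℝ) + 2 ≤ (k:ℝ) := by exact_mod_cast (show j + 2 ≤ k from hj)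
    have hmj : ((j:ℝ)+1) * (c+2) + 1 + c ≤ (m:ℝ) := by
      nlinarith [mul_nonneg (show (0:ℝ) ≤ (k:ℝ) - ((j:ℝ)+2) by linarith)
        (show (0:ℝ) ≤ c + 2 by linarith)]
    have h5 : (j:ℝ) + 3 ≤ ((m:ℝ) - j) - c*((j:ℝ)+1) := by linarith [hmj]
    have hA : ((j:ℝ) + 3) * (m.choose j : ℝ)
        ≤ ((j:ℝ) + 1) * ((m.choose (j+1) : ℝ) - c * (m.choose j : ℝ)) := by
      have h6 := mul_le_mul_of_nonneg_right h5 hBpos.le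
      nlinarith [h6, hchoose]
    have key := key_neg c ((m.choose (j+1) : ℝ) - c * (m.choose j : ℝ))
      (m.choose j : ℝ) (m-1-j) j hc hBpos hA
    have hdiff := qdiff c m j hjm
    have hpos2 : (0:ℝ) < ((m:ℝ)+1) * (((m.choose (j+1) : ℝ) - c * (m.choose j : ℝ))
        * Jsum c (m-1-j) (j+1) - (m.choose j : ℝ) * Jsum c (m-1-j) j) :=
      mul_pos (by positivity) (sub_pos.mpr key)
    rw [hdc]
    linarith [hdiff, hpos2]
  intro t
  rw [hmbar]
  constructor
  · rintro ⟨htm, hup, hdown⟩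
    rcases lt_trichotomy t (k-1) with hlt | heq | hgt
    · exfalso
      have h1 := hdown t le_rfl (by omega)
      have h2 := hinc t (by omega)
      linarith
    · exact heq
    · exfalso
      have h1 := hup (k-1) hgt
      have h2 := hdec (k-1) le_rfl hkm
      linarith
  · rintro rfl
    refine ⟨by omega, ?_, ?_⟩
    · intro i hi
      exact (hinc i (by omega)).le
    · intro i hi him
      exact (hdec i hi him).le
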